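/- Fix an integer n ≥ 3 and real numbers x ≥ 1, P > 0, and T > 0. If x^{n−1} ( −(n−1) (1 − x⁻ⁿ)^{1/2} P + T + (n−1) P ) ≤ 2π, then 2 P^{n−1} T ≤ (4π/n)ⁿ. -/

import Mathlib

open Real

lemma amgm_aux (n : ℕ) (hn : 1 ≤ n) (u v : ℝ) (hu : 0 ≤ u) (hv : 0 ≤ v) :
    u ^ (n - 1) * v ≤ ((((n : ℝ) - 1) * u + v) / n) ^ n := by
  have hn0 : (0:ℝ) < n := by exact_mod_cast hn
  have w1 : (0:ℝ) ≤ ((n:ℝ)-1)/n := by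
    apply div_nonneg _ hn0.le
    have : (1:ℝ) ≤ n := by exact_mod_cast hn
    linarith
  have w2 : (0:ℝ) ≤ 1/(n:ℝ) := by positivity
  have hsum : ((n:ℝ)-1)/n + 1/n = 1 := by field_simp; ring
  have hgm := Real.geom_mean_le_arith_mean2_weighted w1 w2 hu hv hsum
  have hbase : 0 ≤ u ^ (((n:ℝ)-1)/n) * v ^ (1/(n:ℝ)) := by positivity
  have heq : (u ^ (((n:ℝ)-1)/n) * v ^ (1/(n:ℝ))) ^ n = u ^ (n - 1) * v := by
    rw [mul_pow, ← Real.rpow_natCast (u ^ (((n:ℝ)-1)/n)) n,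
        ← Real.rpow_natCast (v ^ (1/(n:ℝ))) n,
        ← Real.rpow_mul hu, ← Real.rpow_mul hv]
    rw [div_mul_cancel₀ _ (ne_of_gt hn0), one_div, inv_mul_cancel₀ (ne_of_gt hn0),
        Real.rpow_one]
    congr 1
    rw [← Real.rpow_natCast u (n-1)]
    congr 1
    push_cast [Nat.cast_sub hn]
    ring
  calc u ^ (n-1) * v = (u ^ (((n:ℝ)-1)/n) * v ^ (1/(n:ℝ))) ^ n := heq.symm
    _ ≤ ((((n:ℝ)-1)/n)*u + (1/(n:ℝ))*v) ^ n := pow_le_pow_left₀ hbase hgm n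
    _ = ((((n : ℝ) - 1) * u + v) / n) ^ n := by ring

theorem stmt_15 (n : ℕ) (hn : 3 ≤ n) (x P T : ℝ) (hx : 1 ≤ x) (hP : 0 < P) (hT : 0 < T)
    (h : x ^ (n - 1) *
        (-(((n : ℝ) - 1) * Real.sqrt (1 - (x ^ n)⁻¹) * P) + T + ((n : ℝ) - 1) * P) ≤
      2 * Real.pi) :
    2 * P ^ (n - 1) * T ≤ (4 * Real.pi / n) ^ n := by
  have hx0 : (0:ℝ) < x := lt_of_lt_of_le one_pos hx
  have hn1 : (1:ℝ) ≤ (n:ℝ) := by exact_mod_cast (by omega : 1 ≤ n)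
  have hn0 : (0:ℝ) < n := by linarith
  have hxn : (1:ℝ) ≤ x ^ n := one_le_pow₀ hx
  have hxn0 : (0:ℝ) < x ^ n := lt_of_lt_of_le one_pos hxn
  have hinv1 : (x ^ n)⁻¹ ≤ 1 := by
    rw [inv_le_one_iff₀]; right; exact hxn
  have hinv0 : 0 < (x ^ n)⁻¹ := inv_pos.mpr hxn0
  set s := Real.sqrt (1 - (x ^ n)⁻¹) with hs
  have hs0 : 0 ≤ s := Real.sqrt_nonneg _
  have hssq : s ^ 2 = 1 - (x ^ n)⁻¹ := Real.sq_sqrt (by linarith)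
  have hs1 : s ≤ 1 := by nlinarith
  have key1 : (x ^ n)⁻¹ ≤ 2 * (1 - s) := by nlinarith
  have hxm1 : (1:ℝ) ≤ x ^ (n-1) := one_le_pow₀ hx
  have hxm0 : (0:ℝ) < x ^ (n-1) := lt_of_lt_of_le one_pos hxm1
  -- bound the bracket from below
  have hb : x ^ (n-1) * (((n:ℝ)-1) * ((x ^ n)⁻¹ / 2) * P + T) ≤ 2 * Real.pi := by
    refine le_trans (mul_le_mul_of_nonneg_left ?_ hxm0.le) h
    nlinarith [mul_nonneg (sub_nonneg.mpr hn1) hP.le]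
  have hxid : x ^ n = x ^ (n-1) * x := by
    rw [← pow_succ]; congr 1; omega
  set u := P / (2*x) with hu
  set v := T * x ^ (n-1) with hv
  have hu0 : 0 ≤ u := by positivity
  have hv0 : 0 ≤ v := by positivity
  have hexp : x ^ (n-1) * (((n:ℝ)-1) * ((x ^ n)⁻¹ / 2) * P + T) = ((n:ℝ)-1)*u + v := by
    rw [hu, hv, hxid]
    field_simp
  have hsum : ((n:ℝ)-1)*u + v ≤ 2 * Real.pi := by rw [← hexp]; exact hb
  have hA0 : 0 ≤ (((n:ℝ)-1)*u + v)/n := by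
    apply div_nonneg _ hn0.le
    have := mul_nonneg (sub_nonneg.mpr hn1) hu0
    linarith
  have hag := amgm_aux n (by omega) u v hu0 hv0
  have hAle : (((n:ℝ)-1)*u + v)/n ≤ 2 * Real.pi / n :=
    div_le_div_of_nonneg_right hsum hn0.le
  have hAn : ((((n:ℝ)-1)*u + v)/n) ^ n ≤ (2 * Real.pi / n) ^ n :=
    pow_le_pow_left₀ hA0 hAle n
  have huv : u ^ (n-1) * v = P ^ (n-1) * T / 2 ^ (n-1) := by
    rw [hu, hv, div_pow, mul_pow]
    field_simp
  have h2n : (2:ℝ) ^ n = 2 * 2 ^ (n-1) := by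
    rw [← pow_succ']; congr 1; omega
  have hfin : (4 * Real.pi / n) ^ n = 2 ^ n * (2 * Real.pi / n) ^ n := by
    rw [← mul_pow]; congr 1; ring
  have hmain : u ^ (n-1) * v ≤ (2 * Real.pi / n) ^ n := le_trans hag hAn
  have h2pos : (0:ℝ) < 2 ^ (n-1) := by positivity
  rw [hfin, h2n]
  rw [huv] at hmain
  calc 2 * P ^ (n-1) * T = 2 * 2 ^ (n-1) * (P ^ (n-1) * T / 2 ^ (n-1)) := by
        field_simp
    _ ≤ 2 * 2 ^ (n-1) * (2 * Real.pi / n) ^ n := by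
        apply mul_le_mul_of_nonneg_left hmain (by positivity)
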